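/- Fix d ≥ 1 and t ≥ 1, and set N = binom(t+d, d). Let f_1, …, f_N be an enumeration (without repetition) of the N distinct monomials of degree d in the polynomial ring k[x_0,…,x_t], and let a_1 < a_2 < ⋯ < a_N be distinct nonnegative integers. Then the determinant of the N×N matrix whose (i,j) entry is the polynomial f_i^{a_j} is a nonzero element of k[x_0,…,x_t]. -/
import Mathlib


set_option synthInstance.maxHeartbeats 1000000
set_option maxHeartbeats 4000000

noncomputable section

/-- Base-`M` uniqueness: a tuple of digits `< M` is determined by its weighted sum. -/
lemma digitsum_inj : ∀ (n : ℕ) {M : ℕ} (u v : Fin n → ℕ),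
    (∀ l, u l < M) → (∀ l, v l < M) →
    (∑ l, u l * M ^ (l : ℕ)) = (∑ l, v l * M ^ (l : ℕ)) → u = v := by
  intro n
  induction n with
  | zero => intro M u v _ _ _; funext l; exact absurd l.2 (Nat.not_lt_zero _)
  | succ n ih =>
    intro M u v hu hv h
    rw [Fin.sum_univ_succ, Fin.sum_univ_succ] at h
    simp only [Fin.val_zero, pow_zero, mul_one, Fin.val_succ, pow_succ] at h
    have h' : u 0 + (∑ l : Fin n, u l.succ * M ^ (l : ℕ)) * M
        = v 0 + (∑ l : Fin n, v l.succ * M ^ (l : ℕ)) * M := by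
      rw [Finset.sum_mul, Finset.sum_mul]
      simpa [mul_assoc] using h
    have hM : 0 < M := lt_of_le_of_lt (Nat.zero_le _) (hu 0)
    have h0 : u 0 = v 0 := by
      have := congrArg (· % M) h'
      simpa [Nat.add_mul_mod_self_right, Nat.mod_eq_of_lt (hu 0),
        Nat.mod_eq_of_lt (hv 0)] using this
    have hsum : (∑ l : Fin n, u l.succ * M ^ (l : ℕ))
        = (∑ l : Fin n, v l.succ * M ^ (l : ℕ)) := by
      rw [h0] at h'
      exact Nat.eq_of_mul_eq_mul_right hM (Nat.add_left_cancel h')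
    have htail := ih (fun l => u l.succ) (fun l => v l.succ)
      (fun l => hu l.succ) (fun l => hv l.succ) hsum
    funext l
    refine Fin.cases ?_ ?_ l
    · exact h0
    · intro m; exact congrFun htail m

/-- A product of monomials is the monomial at the sum of exponents. -/
lemma prod_monomial {R σ ι : Type*} [CommSemiring R] (s : Finset ι) (g : ι → (σ →₀ ℕ)) :
    (∏ i ∈ s, MvPolynomial.monomial (g i) (1 : R))
      = MvPolynomial.monomial (∑ i ∈ s, g i) 1 := by
  induction s using Finset.cons_induction with
  | empty => simp
  | cons i s hi ih =>
    rw [Finset.prod_cons, Finset.sum_cons, ih, MvPolynomial.monomial_mul, one_mul]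

/-- Strict rearrangement inequality for strictly monotone tuples. -/
lemma rearr {n : ℕ} (u v : Fin n → ℕ) (hu : StrictMono u) (hv : StrictMono v)
    (σ : Equiv.Perm (Fin n)) (hσ : σ ≠ 1) :
    ∑ i, u i * v (σ i) < ∑ i, u i * v i := by
  have hmono : Monovary u v := fun {i j} h => (hu.le_iff_le).2 (le_of_lt (hv.lt_iff_lt.1 h))
  rw [hmono.sum_mul_comp_perm_lt_sum_mul_iff]
  intro hM
  have hms : StrictMono (v ∘ σ) := by
    have hmono2 : Monotone (v ∘ σ) := by
      intro i j hij
      by_contra hvv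
      push_neg at hvv
      have hji : u j ≤ u i := hM hvv
      rcases lt_or_eq_of_le hij with hlt | rfl
      · exact absurd hji (not_le.2 (hu hlt))
      · exact lt_irrefl _ hvv
    exact hmono2.strictMono_of_injective (hv.injective.comp σ.injective)
  have hσs : StrictMono (σ : Fin n → Fin n) := fun i j h => hv.lt_iff_lt.1 (hms h)
  have hσsymm : StrictMono (σ.symm : Fin n → Fin n) := by
    intro i j h
    refine hσs.lt_iff_lt.1 ?_
    simpa using h
  haveI : WellFoundedLT (Fin n) := inferInstance
  apply hσ
  ext i
  have h1 : σ i ≤ σ.symm (σ i) := hσsymm.le_apply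
  rw [Equiv.symm_apply_apply] at h1
  exact le_antisymm h1 hσs.le_apply

/-- if `f₁, …, f_N` enumerates (without repetition) the `N = binom(t+d,d)`
monomials of degree `d` in `k[x₀,…,x_t]` and `a₁ < ⋯ < a_N` are distinct nonnegative
integers, then `det (fᵢ^{aⱼ}) ≠ 0`. -/
theorem stmt_12 {k : Type*} [Field k] [IsAlgClosed k]
    (t d : ℕ) (ht : 1 ≤ t) (hd : 1 ≤ d)
    (f : Fin ((t + d).choose d) → MvPolynomial (Fin (t + 1)) k)
    (hmono : ∀ i, ∃ s : Fin (t + 1) →₀ ℕ,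
      (s.sum fun _ e => e) = d ∧ f i = MvPolynomial.monomial s 1)
    (hinj : Function.Injective f)
    (a : Fin ((t + d).choose d) → ℕ) (ha : StrictMono a) :
    Matrix.det (Matrix.of fun i j => f i ^ a j) ≠ 0 := by
  classical
  have hN : True := trivial
  choose s hs hfs using hmono
  have hsinj : Function.Injective s := by
    intro i j hij
    apply hinj
    rw [hfs i, hfs j, hij]
  set M := d + 1 with hM
  have hsl : ∀ i l, s i l < M := by
    intro i l
    have hle : s i l ≤ (s i).sum fun _ e => e := by
      rw [Finsupp.sum]
      by_cases hl : l ∈ (s i).support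
      · exact Finset.single_le_sum (fun _ _ => Nat.zero_le _) hl
      · simp [Finsupp.notMem_support_iff.1 hl]
    rw [hs i] at hle
    omega
  -- weight
  set w : (Fin (t + 1) →₀ ℕ) →+ ℕ :=
    { toFun := fun u => ∑ l, u l * M ^ (l : ℕ)
      map_zero' := by simp
      map_add' := by
        intro u v
        simp [add_mul, Finset.sum_add_distrib] } with hw
  have hwsmul : ∀ (n : ℕ) (u : Fin (t + 1) →₀ ℕ), w (n • u) = n * w u := by
    intro n u
    simp [hw, Finset.mul_sum, mul_assoc]
  set e : Fin ((t + d).choose d) → ℕ := fun i => w (s i) with he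
  have heinj : Function.Injective e := by
    intro i j hij
    apply hsinj
    have := digitsum_inj (t + 1) (fun l => s i l) (fun l => s j l) (hsl i) (hsl j) hij
    exact Finsupp.ext fun l => congrFun this l
  set τ := Tuple.sort e with hτdef
  have hτ : StrictMono (e ∘ τ) :=
    (Tuple.monotone_sort e).strictMono_of_injective (heinj.comp τ.injective)
  set c : Equiv.Perm (Fin ((t + d).choose d)) → (Fin (t + 1) →₀ ℕ) := fun σ => ∑ i, a i • s (σ i) with hc
  have hwc : ∀ σ, w (c σ) = ∑ i, a i * e (σ i) := by
    intro σ
    rw [hc, map_sum]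
    exact Finset.sum_congr rfl fun i _ => hwsmul _ _
  have hkey : ∀ σ : Equiv.Perm (Fin ((t + d).choose d)), σ ≠ τ → w (c σ) < w (c τ) := by
    intro σ hστ
    rw [hwc, hwc]
    have hπ : σ.trans τ.symm ≠ 1 := by
      intro h
      apply hστ
      ext i
      have := congrArg (fun p : Equiv.Perm (Fin ((t + d).choose d)) => τ (p i)) h
      have h2 : σ i = τ i := by simpa using this
      simp [h2]
    have := rearr a (e ∘ τ) ha hτ (σ.trans τ.symm) hπ
    simpa [Function.comp] using this
  have hcne : ∀ σ : Equiv.Perm (Fin ((t + d).choose d)), σ ≠ τ → c σ ≠ c τ := by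
    intro σ hστ hcc
    exact absurd (congrArg w hcc) (ne_of_lt (hkey σ hστ))
  -- compute the coefficient of det at c τ
  have hcoeff : MvPolynomial.coeff (c τ) (Matrix.det (Matrix.of fun i j => f i ^ a j))
      = Equiv.Perm.sign τ • (1 : k) := by
    rw [Matrix.det_apply]
    have hterm : ∀ σ : Equiv.Perm (Fin ((t + d).choose d)),
        (∏ i, (Matrix.of fun i j => f i ^ a j) (σ i) i)
          = MvPolynomial.monomial (c σ) (1 : k) := by
      intro σ
      have : ∀ i : Fin ((t + d).choose d), (Matrix.of fun i j => f i ^ a j) (σ i) i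
          = MvPolynomial.monomial (a i • s (σ i)) (1 : k) := by
        intro i
        simp only [Matrix.of_apply]
        rw [hfs (σ i), MvPolynomial.monomial_pow, one_pow]
      rw [Finset.prod_congr rfl fun i _ => this i, prod_monomial]
    rw [MvPolynomial.coeff_sum]
    rw [Finset.sum_eq_single τ]
    · rw [hterm, MvPolynomial.coeff_smul, MvPolynomial.coeff_monomial, if_pos rfl]
    · intro σ _ hστ
      rw [hterm, MvPolynomial.coeff_smul, MvPolynomial.coeff_monomial,
        if_neg (hcne σ hστ), smul_zero]
    · intro h
      exact absurd (Finset.mem_univ τ) h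
  intro hdet
  rw [hdet, MvPolynomial.coeff_zero] at hcoeff
  rcases Int.units_eq_one_or (Equiv.Perm.sign τ) with h | h <;>
    rw [h] at hcoeff <;> simp at hcoeff
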